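/- The velocity in the moving exponential frame equals Fisher's score: let t ↦ q(t) be a curve of positive densities on Ω such that for each x ∈ Ω the map t ↦ q(t)(x) is differentiable at t₀ and ∑_x q(t)(x) = 1 for all t. Then for every x ∈ Ω the function t ↦ s_{q(t₀)}(q(t))(x) = log(q(t)(x)/q(t₀)(x)) − ∑_z q(t₀)(z) · log(q(t)(z)/q(t₀)(z)) is differentiable at t₀ with derivative equal to (d/dt log q(t)(x))|_{t=t₀} = q'(t₀)(x)/q(t₀)(x). -/

import Mathlib

/-- The velocity in the moving exponential frame equals Fisher's score:
for a differentiable curve of positive densities `t ↦ q t`, the derivative at `t₀` of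
`t ↦ s_{q t₀}(q t)(x)` equals `q' t₀ x / q t₀ x = (d/dt) log (q t x) |_{t = t₀}`. -/
theorem velocity_exp_chart_eq_score {Ω : Type*} [Fintype Ω] [Nonempty Ω]
    (q : ℝ → Ω → ℝ) (q' : Ω → ℝ) (t₀ : ℝ)
    (hpos : ∀ t x, 0 < q t x) (hsum : ∀ t, ∑ x, q t x = 1)
    (hderiv : ∀ x, HasDerivAt (fun t => q t x) (q' x) t₀)
    (x : Ω) :
    HasDerivAt
      (fun t => Real.log (q t x / q t₀ x) - ∑ z, q t₀ z * Real.log (q t z / q t₀ z))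
      (q' x / q t₀ x) t₀ := by
  have hlog : ∀ z : Ω, HasDerivAt (fun t => Real.log (q t z / q t₀ z))
      (q' z / q t₀ z) t₀ := by
    intro z
    have h := ((hderiv z).log (hpos t₀ z).ne').sub_const (Real.log (q t₀ z))
    exact h.congr_of_eventuallyEq (Filter.Eventually.of_forall fun t => Real.log_div (hpos t z).ne' (hpos t₀ z).ne')
  have hsumd : HasDerivAt (fun t => ∑ z, q t₀ z * Real.log (q t z / q t₀ z))
      (∑ z, q t₀ z * (q' z / q t₀ z)) t₀ :=
    HasDerivAt.fun_sum (fun z _ => (hlog z).const_mul (q t₀ z))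
  have hzero : ∑ z, q t₀ z * (q' z / q t₀ z) = 0 := by
    have h1 : HasDerivAt (fun t => ∑ z, q t z) (∑ z, q' z) t₀ :=
      HasDerivAt.fun_sum (fun z _ => hderiv z)
    have h2 : HasDerivAt (fun _ : ℝ => (1 : ℝ)) (∑ z, q' z) t₀ := by
      refine h1.congr_of_eventuallyEq ?_
      filter_upwards with t using (hsum t).symm
    have h3 : (∑ z, q' z) = 0 := by
      have := (hasDerivAt_const t₀ (1 : ℝ)).unique h2
      linarith
    rw [← h3]
    congr 1
    ext z
    rw [mul_div_assoc']
    exact mul_div_cancel_left₀ _ (hpos t₀ z).ne'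
  have := (hlog x).sub hsumd
  rw [hzero, sub_zero] at this
  exact this
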